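/- A family of vectors v^1, ..., v^{2^n} in (ℤ/4ℤ)^n gives a cube tiling of the torus (ℤ/4ℤ)^n if and only if it forms a clique of size 2^n in the Keller graph G_n, whose vertices are the elements of (ℤ/4ℤ)^n and where v, w are adjacent iff v ≠ w and there exists a coordinate i with v_i - w_i = 2. -/

import Mathlib

/-- The cube `v + {0,1}^n` in the discrete torus `(ℤ/4ℤ)^n`. -/
def cube {n : ℕ} (v : Fin n → ZMod 4) : Set (Fin n → ZMod 4) :=
  {x | ∀ i, x i = v i ∨ x i = v i + 1}

/-- The Keller graph `G_n` on vertex set `(ℤ/4ℤ)^n`. -/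
def kellerGraph (n : ℕ) : SimpleGraph (Fin n → ZMod 4) where
  Adj v w := v ≠ w ∧ ∃ i, v i - w i = 2
  symm := by
    constructor
    rintro v w ⟨hne, i, hi⟩
    refine ⟨hne.symm, i, ?_⟩
    have : w i - v i = -(v i - w i) := by ring
    rw [this, hi]; decide
  loopless := by constructor; rintro v ⟨hne, -⟩; exact hne rfl

private lemma z1 : ∀ a b : ZMod 4, a - b = 3 → b = a + 1 := by decide
private lemma z2 : ∀ a b : ZMod 4, a - b ≠ 2 → a - b ≠ 3 → (a = b ∨ a = b + 1) := by decide
private lemma z3 : ∀ a b c : ZMod 4, (c = a ∨ c = a + 1) → (c = b ∨ c = b + 1) → a - b ≠ 2 := by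
  decide

/-- If no coordinate differs by 2, the cubes intersect. -/
lemma cube_inter_nonempty {n : ℕ} (v w : Fin n → ZMod 4)
    (h : ∀ i, v i - w i ≠ 2) : (cube v ∩ cube w).Nonempty := by
  refine ⟨fun i => if v i - w i = 3 then w i else v i, fun i => ?_, fun i => ?_⟩
  · show (if v i - w i = 3 then w i else v i) = v i ∨ (if v i - w i = 3 then w i else v i) = v i + 1
    by_cases h3 : v i - w i = 3
    · rw [if_pos h3]; exact Or.inr (z1 _ _ h3)
    · rw [if_neg h3]; exact Or.inl rfl
  · show (if v i - w i = 3 then w i else v i) = w i ∨ (if v i - w i = 3 then w i else v i) = w i + 1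
    by_cases h3 : v i - w i = 3
    · rw [if_pos h3]; exact Or.inl rfl
    · rw [if_neg h3]; exact z2 _ _ (h i) h3

lemma disjoint_of_diff_two {n : ℕ} (v w : Fin n → ZMod 4) (i : Fin n)
    (h : v i - w i = 2) : Disjoint (cube v) (cube w) := by
  rw [Set.disjoint_left]
  intro x hv hw
  exact z3 (v i) (w i) (x i) (hv i) (hw i) h

noncomputable def cubeF {n : ℕ} (v : Fin n → ZMod 4) : Finset (Fin n → ZMod 4) := by
  classical exact Finset.univ.filter (· ∈ cube v)

lemma coe_cubeF {n : ℕ} (v : Fin n → ZMod 4) : (cubeF v : Set (Fin n → ZMod 4)) = cube v := by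
  classical
  ext x; simp [cubeF]

lemma card_cubeF {n : ℕ} (v : Fin n → ZMod 4) : (cubeF v).card = 2 ^ n := by
  classical
  have h10 : (1 : ZMod 4) ≠ 0 := by decide
  have key : (Finset.univ : Finset (Fin n → Bool)).card = (cubeF v).card := by
    apply Finset.card_bij (fun b _ => fun i => v i + if b i then 1 else 0)
    · intro b _
      simp only [cubeF, Finset.mem_filter, Finset.mem_univ, true_and]
      intro i
      by_cases hb : b i <;> simp [hb, cube]
    · intro b _ b' _ hbb
      funext i
      have hi := congrFun hbb i
      by_cases hb : b i <;> by_cases hb' : b' i <;> simp_all [add_right_inj]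
    · intro x hx
      simp only [cubeF, Finset.mem_filter, Finset.mem_univ, true_and] at hx
      refine ⟨fun i => decide (x i = v i + 1), Finset.mem_univ _, ?_⟩
      funext i
      rcases hx i with h | h
      · have hne : x i ≠ v i + 1 := by rw [h]; intro hc; exact h10 (left_eq_add.mp hc)
        simp [hne, h]
      · simp [h]
  rw [← key, Finset.card_univ, Fintype.card_fun, Fintype.card_fin, Fintype.card_bool]

theorem tiling_iff_keller_clique {n : ℕ} (P : Finset (Fin n → ZMod 4))
    (hcard : P.card = 2 ^ n) :
    ((P : Set (Fin n → ZMod 4)).Pairwise (fun v w => Disjoint (cube v) (cube w)) ∧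
      (⋃ v ∈ P, cube v) = Set.univ) ↔
    (kellerGraph n).IsClique (P : Set (Fin n → ZMod 4)) := by
  classical
  constructor
  · rintro ⟨hdisj, -⟩
    intro v hv w hw hvw
    refine ⟨hvw, ?_⟩
    by_contra hc
    push_neg at hc
    have := cube_inter_nonempty v w hc
    exact (Set.not_disjoint_iff_nonempty_inter.mpr this) (hdisj hv hw hvw)
  · intro hcl
    have hdisj : (P : Set (Fin n → ZMod 4)).Pairwise
        (fun v w => Disjoint (cube v) (cube w)) := by
      intro v hv w hw hvw
      obtain ⟨-, i, hi⟩ := hcl hv hw hvw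
      exact disjoint_of_diff_two v w i hi
    refine ⟨hdisj, ?_⟩
    have hdisjF : ∀ v ∈ P, ∀ w ∈ P, v ≠ w → Disjoint (cubeF v) (cubeF w) := by
      intro v hv w hw hvw
      rw [← Finset.disjoint_coe, coe_cubeF, coe_cubeF]
      exact hdisj hv hw hvw
    have hcardT : (P.biUnion cubeF).card = 2 ^ n * 2 ^ n := by
      rw [Finset.card_biUnion hdisjF]
      rw [Finset.sum_congr rfl (fun v _ => card_cubeF v), Finset.sum_const, hcard,
        smul_eq_mul]
    have huniv : P.biUnion cubeF = Finset.univ := by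
      apply Finset.eq_univ_of_card
      rw [hcardT, Fintype.card_fun, Fintype.card_fin]
      have h4 : Fintype.card (ZMod 4) = 4 := rfl
      rw [h4, ← mul_pow]; norm_num
    ext x
    simp only [Set.mem_iUnion, Set.mem_univ, iff_true]
    have hxm : x ∈ P.biUnion cubeF := huniv ▸ Finset.mem_univ x
    rw [Finset.mem_biUnion] at hxm
    obtain ⟨v, hv, hx⟩ := hxm
    have : x ∈ cube v := by rw [← coe_cubeF]; exact hx
    exact ⟨v, hv, this⟩
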